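/- arXiv:1412.2223 — 5 statements merged into one kernel-verified Lean document; each statement's English description precedes it below -/
import Mathlib

section
/- The collection b(τ) = {N_{φ,Q} : φ ∈ F(L,ℝ), Q ∈ U} ∪ P(L × ℝ), where N_{φ,Q} = {(λ, φ(λ)) : λ ∈ Q} ∪ {[φ]_I}, forms a basis for a topology on (L × ℝ) ⊎ K: for any two basic sets A, B and any x ∈ A ∩ B there exists a basic set C with x ∈ C ⊆ A ∩ B. -/
open Filter Set

variable (L : Type) (U : Ultrafilter L)

/-- The underlying set `R_L = (L × ℝ) ⊎ K`, where `K = F(L,ℝ)/I` is realized as the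
ultrapower `Filter.Germ ↑U ℝ` (the quotient of `L → ℝ` by equality on a set of `U`). -/
def RL := (L × ℝ) ⊕ Filter.Germ (U : Filter L) ℝ

/-- The basic neighborhood `N_{φ,Q} = {(λ, φ(λ)) : λ ∈ Q} ∪ {[φ]_I}`. -/
def Nset (φ : L → ℝ) (Q : Set L) : Set (RL L U) :=
  (Sum.inl '' ((fun l => (l, φ l)) '' Q)) ∪ {Sum.inr (φ : Filter.Germ (U : Filter L) ℝ)}

/-- The basis `b(τ) = {N_{φ,Q} : φ ∈ F(L,ℝ), Q ∈ U} ∪ P(L × ℝ)`. -/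
def slimBasis : Set (Set (RL L U)) :=
  {S | ∃ φ : L → ℝ, ∃ Q ∈ U, S = Nset L U φ Q} ∪ {S | ∃ A : Set (L × ℝ), S = Sum.inl '' A}

/-- The slim topology `τ_U` generated by this basis. -/
def slimTop : TopologicalSpace (RL L U) := TopologicalSpace.generateFrom (slimBasis L U)

/-- the collection `b(τ)` forms a basis for a topology on `(L × ℝ) ⊎ K`:
for any basic sets `A, B` and any `x ∈ A ∩ B` there is a basic `C` with `x ∈ C ⊆ A ∩ B`. -/
theorem stmt2 (hfree : ∀ x : L, (U : Filter L) ≠ pure x) :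
    ∀ A ∈ slimBasis L U, ∀ B ∈ slimBasis L U, ∀ x ∈ A ∩ B,
      ∃ C ∈ slimBasis L U, x ∈ C ∧ C ⊆ A ∩ B := by

  rintro A hA B hB x ⟨hxA, hxB⟩
  rcases hA with ⟨φ, Q, hQ, rfl⟩ | ⟨S, rfl⟩
  · rcases hB with ⟨ψ, R, hR, rfl⟩ | ⟨T, rfl⟩
    · rcases hxA with ⟨_, ⟨l, hlQ, rfl⟩, rfl⟩ | hx
      · -- x = inl (l, φ l)
        rcases hxB with ⟨_, ⟨m, hmR, rfl⟩, h⟩ | h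
        · refine ⟨Sum.inl '' {(l, φ l)}, Or.inr ⟨_, rfl⟩, ⟨_, rfl, rfl⟩, ?_⟩
          rintro _ ⟨p, hp, rfl⟩
          rcases hp with rfl
          exact ⟨Or.inl ⟨_, ⟨l, hlQ, rfl⟩, rfl⟩, Or.inl ⟨_, ⟨m, hmR, rfl⟩, h⟩⟩
        · exact absurd h (fun h' => Sum.inl_ne_inr (Set.mem_singleton_iff.mp h'))
      · -- x = inr φ
        rcases hx with rfl
        rcases hxB with ⟨_, ⟨m, hmR, rfl⟩, h⟩ | h
        · exact absurd h (by simp)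
        · have hcoe : (φ : Filter.Germ (U : Filter L) ℝ) = ψ :=
            Sum.inr.inj (Set.mem_singleton_iff.mp h)
          have hE : {l | φ l = ψ l} ∈ U := by
            rwa [Filter.Germ.coe_eq] at hcoe
          refine ⟨Nset L U φ (Q ∩ R ∩ {l | φ l = ψ l}),
            Or.inl ⟨φ, _, inter_mem (inter_mem hQ hR) hE, rfl⟩,
            Or.inr rfl, ?_⟩
          rintro y (⟨_, ⟨l, ⟨⟨hlQ, hlR⟩, hlE⟩, rfl⟩, rfl⟩ | hy)
          · refine ⟨Or.inl ⟨_, ⟨l, hlQ, rfl⟩, rfl⟩, Or.inl ⟨_, ⟨l, hlR, rfl⟩, ?_⟩⟩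
            simp only [Set.mem_setOf_eq] at hlE
            exact congrArg Sum.inl (show (l, ψ l) = (l, φ l) by rw [hlE])
          · rcases hy with rfl
            exact ⟨Or.inr rfl, Or.inr h⟩
    · -- B = inl '' T
      rcases hxB with ⟨p, hpT, rfl⟩
      rcases hxA with ⟨_, ⟨l, hlQ, rfl⟩, h⟩ | h
      · refine ⟨Sum.inl '' {(l, φ l)}, Or.inr ⟨_, rfl⟩, ⟨_, rfl, h⟩, ?_⟩
        rintro _ ⟨q, hq, rfl⟩
        rcases hq with rfl
        exact ⟨Or.inl ⟨_, ⟨l, hlQ, rfl⟩, rfl⟩, ⟨p, hpT, h.symm⟩⟩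
      · exact absurd h (fun h' => Sum.inl_ne_inr (Set.mem_singleton_iff.mp h'))
  · rcases hB with ⟨ψ, R, hR, rfl⟩ | ⟨T, rfl⟩
    · rcases hxA with ⟨p, hpS, rfl⟩
      rcases hxB with ⟨_, ⟨l, hlR, rfl⟩, h⟩ | h
      · refine ⟨Sum.inl '' {(l, ψ l)}, Or.inr ⟨_, rfl⟩, ⟨_, rfl, h⟩, ?_⟩
        rintro _ ⟨q, hq, rfl⟩
        rcases hq with rfl
        exact ⟨⟨p, hpS, h.symm⟩, Or.inl ⟨_, ⟨l, hlR, rfl⟩, rfl⟩⟩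
      · exact absurd h (fun h' => Sum.inl_ne_inr (Set.mem_singleton_iff.mp h'))
    · refine ⟨Sum.inl '' (S ∩ T), Or.inr ⟨_, rfl⟩, ?_, ?_⟩
      · rcases hxA with ⟨p, hpS, rfl⟩
        rcases hxB with ⟨q, hqT, h⟩
        exact ⟨p, ⟨hpS, (Sum.inl.inj h) ▸ hqT⟩, rfl⟩
      · rintro _ ⟨p, ⟨h1, h2⟩, rfl⟩
        exact ⟨⟨p, h1, rfl⟩, ⟨p, h2, rfl⟩⟩
end

section
/- The topology τ on R_L = (L × ℝ) ⊎ K generated by the basis {N_{φ,Q} : φ ∈ F(L,ℝ), Q ∈ U} ∪ P(L × ℝ) is Hausdorff. -/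
open Filter Set

variable (L : Type) (U : Ultrafilter L)

lemma isOpen_of_mem_slimBasis {S : Set (RL L U)} (h : S ∈ slimBasis L U) :
    @IsOpen _ (slimTop L U) S :=
  TopologicalSpace.GenerateOpen.basic _ h

lemma isOpen_inl (A : Set (L × ℝ)) : @IsOpen _ (slimTop L U) (Sum.inl '' A) :=
  isOpen_of_mem_slimBasis L U (Or.inr ⟨A, rfl⟩)

lemma isOpen_Nset (φ : L → ℝ) {Q : Set L} (hQ : Q ∈ U) :
    @IsOpen _ (slimTop L U) (Nset L U φ Q) :=
  isOpen_of_mem_slimBasis L U (Or.inl ⟨φ, Q, hQ, rfl⟩)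

lemma inl_mem_Nset {φ : L → ℝ} {Q : Set L} {p : L × ℝ} :
    Sum.inl p ∈ Nset L U φ Q ↔ p.1 ∈ Q ∧ φ p.1 = p.2 := by
  simp only [Nset, mem_union, mem_image, mem_singleton_iff]
  constructor
  · rintro (⟨q, ⟨l, hl, rfl⟩, hq⟩ | h)
    · cases hq; exact ⟨hl, rfl⟩
    · cases h
  · rintro ⟨h1, h2⟩
    exact Or.inl ⟨(p.1, φ p.1), ⟨p.1, h1, rfl⟩, by rw [h2]⟩

/-- the topology on `R_L = (L × ℝ) ⊎ K` generated by the basis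
`{N_{φ,Q}} ∪ P(L × ℝ)` is Hausdorff. -/
theorem stmt3 (hfree : ∀ x : L, (U : Filter L) ≠ pure x) :
    @T2Space (RL L U) (slimTop L U) := by
  letI : TopologicalSpace (RL L U) := slimTop L U
  constructor
  intro x y hxy
  match x, y with
  | Sum.inl p, Sum.inl q =>
      refine ⟨Sum.inl '' {p}, Sum.inl '' {q}, isOpen_inl L U _, isOpen_inl L U _,
        ⟨p, rfl, rfl⟩, ⟨q, rfl, rfl⟩, ?_⟩
      rw [Set.disjoint_iff]
      rintro z ⟨⟨a, ha, rfl⟩, ⟨b, hb, hz⟩⟩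
      cases ha; cases hb
      exact hxy (by rw [hz])
  | Sum.inl p, Sum.inr g =>
      induction g using Filter.Germ.inductionOn with
      | h φ =>
        have hQ : ({p.1}ᶜ : Set L) ∈ U := by
          rw [Ultrafilter.compl_mem_iff_notMem]
          intro h
          exact hfree p.1 ((Filter.NeBot.eq_pure_iff U.neBot).mpr h)
        refine ⟨Sum.inl '' {p}, Nset L U φ {p.1}ᶜ, isOpen_inl L U _, isOpen_Nset L U φ hQ,
          ⟨p, rfl, rfl⟩, Or.inr rfl, ?_⟩
        rw [Set.disjoint_iff]
        rintro z ⟨⟨a, ha, rfl⟩, hz⟩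
        cases ha
        exact ((inl_mem_Nset L U).mp hz).1 rfl
  | Sum.inr g, Sum.inl p =>
      induction g using Filter.Germ.inductionOn with
      | h φ =>
        have hQ : ({p.1}ᶜ : Set L) ∈ U := by
          rw [Ultrafilter.compl_mem_iff_notMem]
          intro h
          exact hfree p.1 ((Filter.NeBot.eq_pure_iff U.neBot).mpr h)
        refine ⟨Nset L U φ {p.1}ᶜ, Sum.inl '' {p}, isOpen_Nset L U φ hQ, isOpen_inl L U _,
          Or.inr rfl, ⟨p, rfl, rfl⟩, ?_⟩
        rw [Set.disjoint_iff]
        rintro z ⟨hz, ⟨a, ha, rfl⟩⟩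
        cases ha
        exact ((inl_mem_Nset L U).mp hz).1 rfl
  | Sum.inr g, Sum.inr h =>
      induction g using Filter.Germ.inductionOn with
      | h φ =>
      induction h using Filter.Germ.inductionOn with
      | h ψ =>
        have hne : (φ : Filter.Germ (U : Filter L) ℝ) ≠ (ψ : Filter.Germ (U : Filter L) ℝ) := by
          intro he; exact hxy (by rw [he])
        have hQ : {l | φ l ≠ ψ l} ∈ U := by
          have h1 : {l | φ l = ψ l} ∉ U := fun h => hne (Filter.Germ.coe_eq.mpr h)
          exact Ultrafilter.compl_mem_iff_notMem.mpr h1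
        refine ⟨Nset L U φ {l | φ l ≠ ψ l}, Nset L U ψ {l | φ l ≠ ψ l},
          isOpen_Nset L U φ hQ, isOpen_Nset L U ψ hQ, Or.inr rfl, Or.inr rfl, ?_⟩
        rw [Set.disjoint_iff]
        rintro (p | k) ⟨h1, h2⟩
        · obtain ⟨hp1, hp2⟩ := (inl_mem_Nset L U).mp h1
          obtain ⟨hq1, hq2⟩ := (inl_mem_Nset L U).mp h2
          exact hp1 (hp2.trans hq2.symm)
        · have e1 : k = (φ : Filter.Germ (U : Filter L) ℝ) := by
            rcases h1 with h | h
            · rcases h with ⟨a, _, ha⟩; cases ha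
            · exact Sum.inr_injective h
          have e2 : k = (ψ : Filter.Germ (U : Filter L) ℝ) := by
            rcases h2 with h | h
            · rcases h with ⟨a, _, ha⟩; cases ha
            · exact Sum.inr_injective h
          exact hne (e1 ▸ e2)
end

section
/- The slim topology τ_U is finer than any topology τ that makes (L × ℝ) ⊎ ℝ^L/U into an (L,U)-completion of ℝ: every τ-open set is τ_U-open. -/
open Filter Set

variable (L : Type) (U : Ultrafilter L)

/-- the slim topology `τ_U` is finer than any topology `τ` making
`(L × ℝ) ⊎ ℝ^L/U` an `(L,U)`-completion of `ℝ`: every `τ`-open set is `τ_U`-open. -/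
theorem stmt13 (hfree : ∀ x : L, (U : Filter L) ≠ pure x)
    (τ : TopologicalSpace (RL L U))
    (ht2 : @T2Space (RL L U) τ)
    (hdense : @Dense (RL L U) τ (Set.range (Sum.inl : L × ℝ → RL L U)))
    (hlim : ∀ φ : L → ℝ,
      Filter.Tendsto (fun l => (Sum.inl (l, φ l) : RL L U)) (U : Filter L)
        (@nhds (RL L U) τ (Sum.inr (φ : Filter.Germ (U : Filter L) ℝ)))) :
    ∀ S : Set (RL L U), @IsOpen (RL L U) τ S → @IsOpen (RL L U) (slimTop L U) S := by
  intro S hS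
  rw [@isOpen_iff_forall_mem_open (RL L U) (slimTop L U) S]
  intro x hx
  cases x with
  | inl p =>
    refine ⟨Sum.inl '' {p}, ?_, ?_, ⟨p, rfl, rfl⟩⟩
    · rintro _ ⟨q, hq, rfl⟩
      simp only [mem_singleton_iff] at hq
      subst hq; exact hx
    · exact TopologicalSpace.GenerateOpen.basic _ (Or.inr ⟨{p}, rfl⟩)
  | inr g =>
    induction g using Filter.Germ.inductionOn with
    | h φ =>
      have hQ : {l | (Sum.inl (l, φ l) : RL L U) ∈ S} ∈ (U : Filter L) :=
        (hlim φ) (hS.mem_nhds hx)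
      refine ⟨Nset L U φ {l | (Sum.inl (l, φ l) : RL L U) ∈ S}, ?_, ?_, ?_⟩
      · rintro y (⟨_, ⟨l, hl, rfl⟩, rfl⟩ | hy)
        · exact hl
        · have hy : y = _ := hy
          subst hy; exact hx
      · exact TopologicalSpace.GenerateOpen.basic _ (Or.inl ⟨φ, _, hQ, rfl⟩)
      · exact Or.inr rfl
end

section
/- A topology τ making (L × ℝ) ⊎ ℝ^L/U an (L,U)-completion of ℝ equals the slim topology τ_U if and only if for every B ⊆ L × ℝ, the τ-closure of B equals B ∪ {[φ]_U : there exists A ∈ U with (λ, φ(λ)) ∈ B for all λ ∈ A}. -/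
open Filter Set

variable (L : Type) (U : Ultrafilter L)

section Helpers

variable {L U}

lemma germ_rep (g : Filter.Germ (U : Filter L) ℝ) :
    ∃ φ : L → ℝ, (φ : Filter.Germ (U : Filter L) ℝ) = g :=
  g.inductionOn (fun φ => ⟨φ, rfl⟩)

lemma neq_of_neq_on (φ ψ : L → ℝ) (A : Set L) (hA : A ∈ U)
    (h : ∀ l ∈ A, ψ l ≠ φ l) :
    (ψ : Filter.Germ (U : Filter L) ℝ) ≠ (φ : Filter.Germ (U : Filter L) ℝ) := by
  intro he
  rw [Filter.Germ.coe_eq] at he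
  obtain ⟨l, hl1, hl2⟩ := Ultrafilter.nonempty_of_mem (Filter.inter_mem hA he)
  exact h l hl1 hl2

lemma neq_mem (φ ψ : L → ℝ)
    (h : (ψ : Filter.Germ (U : Filter L) ℝ) ≠ (φ : Filter.Germ (U : Filter L) ℝ)) :
    {l | ψ l ≠ φ l} ∈ U := by
  have h2 : ¬ ψ =ᶠ[(U : Filter L)] φ := fun he => h (Filter.Germ.coe_eq.mpr he)
  rw [show {l | ψ l ≠ φ l} = {l | ψ l = φ l}ᶜ by ext l; simp]
  rw [Ultrafilter.compl_mem_iff_notMem]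
  exact fun hm => h2 hm

lemma inr_not_mem_Nset (φ ψ : L → ℝ) (Q : Set L)
    (h : (ψ : Filter.Germ (U : Filter L) ℝ) ≠ (φ : Filter.Germ (U : Filter L) ℝ)) :
    (Sum.inr (ψ : Filter.Germ (U : Filter L) ℝ) : RL L U) ∉ Nset L U φ Q := by
  rintro (⟨p, _, hp⟩ | hp)
  · exact Sum.inl_ne_inr hp
  · exact h (Sum.inr.inj hp)

/-- Forward direction: closure computation in the slim topology. -/
lemma slim_closure
    (hlim : ∀ φ : L → ℝ,
      Filter.Tendsto (fun l => (Sum.inl (l, φ l) : RL L U)) (U : Filter L)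
        (@nhds (RL L U) (slimTop L U) (Sum.inr (φ : Filter.Germ (U : Filter L) ℝ))))
    (B : Set (L × ℝ)) :
    @closure (RL L U) (slimTop L U) (Sum.inl '' B) =
      (Sum.inl '' B) ∪
        {x : RL L U | ∃ φ : L → ℝ,
          x = Sum.inr (φ : Filter.Germ (U : Filter L) ℝ) ∧
          ∃ A ∈ U, ∀ l ∈ A, (l, φ l) ∈ B} := by
  letI := slimTop L U
  apply subset_antisymm
  · apply closure_minimal subset_union_left
    rw [← isOpen_compl_iff, isOpen_iff_forall_mem_open]
    intro x hx
    match x with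
    | Sum.inl p =>
        refine ⟨Sum.inl '' {p}, ?_, ?_, ⟨p, rfl, rfl⟩⟩
        · rintro y ⟨q, hq, rfl⟩
          cases hq
          exact hx
        · exact TopologicalSpace.isOpen_generateFrom_of_mem (Or.inr ⟨{p}, rfl⟩)
    | Sum.inr g =>
        obtain ⟨φ, rfl⟩ := germ_rep g
        have hS : {l | (l, φ l) ∈ B} ∉ U := fun hmem =>
          hx (Or.inr ⟨φ, rfl, {l | (l, φ l) ∈ B}, hmem, fun l hl => hl⟩)
        have hQ : {l | (l, φ l) ∉ B} ∈ U := by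
          rw [show {l | (l, φ l) ∉ B} = {l | (l, φ l) ∈ B}ᶜ by ext l; simp]
          exact Ultrafilter.compl_mem_iff_notMem.mpr hS
        refine ⟨Nset L U φ {l | (l, φ l) ∉ B}, ?_, ?_, Or.inr rfl⟩
        · rintro y (⟨q, ⟨l, hl, rfl⟩, rfl⟩ | hy)
          · rintro (⟨q', hq', he⟩ | ⟨ψ, hψ, -⟩)
            · cases Sum.inl.inj he; exact hl hq'
            · exact Sum.inl_ne_inr hψ
          · cases hy
            exact hx
        · exact TopologicalSpace.isOpen_generateFrom_of_mem
            (Or.inl ⟨φ, {l | (l, φ l) ∉ B}, hQ, rfl⟩)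
  · rintro x (hx | ⟨φ, rfl, A, hA, hAB⟩)
    · exact subset_closure hx
    · exact mem_closure_of_tendsto (hlim φ)
        (Filter.mem_of_superset hA (fun l hl => ⟨(l, φ l), hAB l hl, rfl⟩))

/-- Backward direction. -/
lemma slim_eq {τ : TopologicalSpace (RL L U)}
    (hfree : ∀ x : L, (U : Filter L) ≠ pure x)
    (hlim : ∀ φ : L → ℝ,
      Filter.Tendsto (fun l => (Sum.inl (l, φ l) : RL L U)) (U : Filter L)
        (@nhds (RL L U) τ (Sum.inr (φ : Filter.Germ (U : Filter L) ℝ))))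
    (hform : ∀ B : Set (L × ℝ),
        @closure (RL L U) τ (Sum.inl '' B) =
          (Sum.inl '' B) ∪
            {x : RL L U | ∃ φ : L → ℝ,
              x = Sum.inr (φ : Filter.Germ (U : Filter L) ℝ) ∧
              ∃ A ∈ U, ∀ l ∈ A, (l, φ l) ∈ B}) :
    τ = slimTop L U := by
  letI := τ
  letI : TopologicalSpace ((L × ℝ) ⊕ Filter.Germ (U : Filter L) ℝ) := τ
  have hsingle : ∀ p : L × ℝ, IsOpen {(Sum.inl p : RL L U)} := by
    intro p
    rw [← isClosed_compl_iff]
    have hc : ({(Sum.inl p : RL L U)}ᶜ : Set (RL L U)) = closure (Sum.inl '' ({p}ᶜ)) := by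
      refine Eq.trans ?_ (hform _).symm
      ext x
      constructor
      · intro hx
        match x with
        | Sum.inl q =>
            exact Or.inl ⟨q, fun h => hx (congrArg Sum.inl h), rfl⟩
        | Sum.inr g =>
            obtain ⟨φ, rfl⟩ := germ_rep g
            refine Or.inr ⟨φ, rfl, {p.1}ᶜ, ?_, fun l hl h => hl (congrArg Prod.fst h)⟩
            rw [Ultrafilter.compl_mem_iff_notMem]
            intro hmem
            exact hfree p.1 ((U.neBot.le_pure_iff).mp (Filter.le_pure_iff.mpr hmem))
      · rintro (⟨q, hq, rfl⟩ | ⟨φ, rfl, _⟩) h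
        · exact hq (Sum.inl.inj h)
        · exact Sum.inr_ne_inl h
    refine (congrArg (@IsClosed (RL L U) τ) hc).mpr ?_
    exact isClosed_closure
  apply le_antisymm
  · -- τ ≤ slimTop : every basic slim set is τ-open
    apply le_generateFrom
    rintro S (⟨φ, Q, hQ, rfl⟩ | ⟨A, rfl⟩)
    · -- Nset φ Q is τ-open
      rw [← isClosed_compl_iff]
      apply isClosed_of_closure_subset
      set B : Set (L × ℝ) := {p | ¬ (p.1 ∈ Q ∧ p.2 = φ p.1)} with hB
      set B' : Set (L × ℝ) := {p | p.2 ≠ φ p.1} with hB'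
      have hstep1 : (Nset L U φ Q)ᶜ ⊆ (Sum.inl '' B) ∪ closure (Sum.inl '' B') := by
        intro x hx
        match x with
        | Sum.inl q =>
            refine Or.inl ⟨q, ?_, rfl⟩
            intro ⟨h1, h2⟩
            exact hx (Or.inl ⟨(q.1, φ q.1), ⟨q.1, h1, rfl⟩, by rw [← h2]⟩)
        | Sum.inr g =>
            obtain ⟨ψ, rfl⟩ := germ_rep g
            have hne : (ψ : Filter.Germ (U : Filter L) ℝ) ≠ φ := fun he => hx (Or.inr (by
              exact congrArg Sum.inr he))
            refine Or.inr ?_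
            rw [hform]
            exact Or.inr ⟨ψ, rfl, {l | ψ l ≠ φ l}, neq_mem φ ψ hne, fun l hl => hl⟩
      have hsub : closure ((Nset L U φ Q)ᶜ) ⊆
          closure (Sum.inl '' B) ∪ closure (Sum.inl '' B') := by
        exact (closure_mono hstep1).trans (by rw [closure_union, closure_closure])
      refine hsub.trans ?_
      apply union_subset
      · rw [hform]
        apply union_subset
        · rintro x ⟨q, hq, rfl⟩ (⟨q', ⟨l, hl, rfl⟩, he⟩ | he)
          · exact hq (by cases Sum.inl.inj he; exact ⟨hl, rfl⟩)
          · exact Sum.inl_ne_inr (Set.mem_singleton_iff.mp he)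
        · rintro x ⟨ψ, rfl, A, hA, hAB⟩
          refine inr_not_mem_Nset φ ψ Q ?_
          refine neq_of_neq_on φ ψ (A ∩ Q) (Filter.inter_mem hA hQ) ?_
          rintro l ⟨hlA, hlQ⟩ he
          exact hAB l hlA ⟨hlQ, he⟩
      · rw [hform]
        apply union_subset
        · rintro x ⟨q, hq, rfl⟩ (⟨q', ⟨l, hl, rfl⟩, he⟩ | he)
          · exact hq (by cases Sum.inl.inj he; rfl)
          · exact Sum.inl_ne_inr (Set.mem_singleton_iff.mp he)
        · rintro x ⟨ψ, rfl, A, hA, hAB⟩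
          exact inr_not_mem_Nset φ ψ Q (neq_of_neq_on φ ψ A hA hAB)
    · -- Sum.inl '' A is τ-open
      have : Sum.inl '' A = ⋃ p ∈ A, {(Sum.inl p : RL L U)} := by
        ext x; simp [eq_comm]
      rw [this]
      exact isOpen_biUnion (fun p _ => hsingle p)
  · -- slimTop ≤ τ : every τ-open set is slim-open
    rw [TopologicalSpace.le_def]
    intro O hO
    rw [@isOpen_iff_forall_mem_open _ (slimTop L U)]
    intro x hx
    match x with
    | Sum.inl p =>
        refine ⟨Sum.inl '' {p}, ?_, ?_, ⟨p, rfl, rfl⟩⟩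
        · rintro y ⟨q, hq, rfl⟩; cases hq; exact hx
        · exact TopologicalSpace.isOpen_generateFrom_of_mem (Or.inr ⟨{p}, rfl⟩)
    | Sum.inr g =>
        obtain ⟨φ, rfl⟩ := germ_rep g
        have hQ : {l | (Sum.inl (l, φ l) : RL L U) ∈ O} ∈ (U : Filter L) :=
          hlim φ (hO.mem_nhds hx)
        refine ⟨Nset L U φ {l | (Sum.inl (l, φ l) : RL L U) ∈ O}, ?_, ?_, Or.inr rfl⟩
        · rintro y (⟨q, ⟨l, hl, rfl⟩, rfl⟩ | hy)
          · exact hl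
          · cases hy; exact hx
        · exact TopologicalSpace.isOpen_generateFrom_of_mem
            (Or.inl ⟨φ, {l | (Sum.inl (l, φ l) : RL L U) ∈ O}, hQ, rfl⟩)

end Helpers

/-- a topology `τ` making `(L × ℝ) ⊎ ℝ^L/U` an `(L,U)`-completion of `ℝ`
equals the slim topology iff for every `B ⊆ L × ℝ` the `τ`-closure of `B` equals
`B ∪ {[φ]_U : ∃ A ∈ U, ∀ λ ∈ A, (λ, φ(λ)) ∈ B}`. -/
theorem stmt14 (hfree : ∀ x : L, (U : Filter L) ≠ pure x)
    (τ : TopologicalSpace (RL L U))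
    (ht2 : @T2Space (RL L U) τ)
    (hdense : @Dense (RL L U) τ (Set.range (Sum.inl : L × ℝ → RL L U)))
    (hlim : ∀ φ : L → ℝ,
      Filter.Tendsto (fun l => (Sum.inl (l, φ l) : RL L U)) (U : Filter L)
        (@nhds (RL L U) τ (Sum.inr (φ : Filter.Germ (U : Filter L) ℝ)))) :
    τ = slimTop L U ↔
      ∀ B : Set (L × ℝ),
        @closure (RL L U) τ (Sum.inl '' B) =
          (Sum.inl '' B) ∪
            {x : RL L U | ∃ φ : L → ℝ,
              x = Sum.inr (φ : Filter.Germ (U : Filter L) ℝ) ∧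
              ∃ A ∈ U, ∀ l ∈ A, (l, φ l) ∈ B} := by
  constructor
  · rintro rfl
    exact slim_closure hlim
  · intro hform
    exact slim_eq hfree hlim hform
end

section
/- For E ⊆ ℝ, the closure of L × E in the canonical (L,U)-completion equals (L × E) ⊎ E*, where E* = {[ψ]_U : ψ(λ) ∈ E for all λ ∈ L}. -/
open Filter Set

variable (L : Type) (U : Ultrafilter L)

lemma nset_subset {φ1 φ2 : L → ℝ} {Q1 Q2 : Set L}
    (hQ : Q1 ⊆ Q2) (hφ : ∀ l ∈ Q1, φ1 l = φ2 l)
    (hg : (φ1 : Filter.Germ (U : Filter L) ℝ) = (φ2 : Filter.Germ (U : Filter L) ℝ)) :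
    Nset L U φ1 Q1 ⊆ Nset L U φ2 Q2 := by
  rintro x (⟨p, ⟨l, hl, rfl⟩, rfl⟩ | hx)
  · exact Or.inl ⟨(l, φ2 l), ⟨l, hQ hl, rfl⟩, by simp [hφ l hl]; rfl⟩
  · right; change x = _ at hx; change x = _; rw [hx, hg]

lemma exists_basic {O : Set (RL L U)} (hO : @IsOpen _ (slimTop L U) O)
    {g : Filter.Germ (U : Filter L) ℝ} (hg : Sum.inr g ∈ O) :
    ∃ φ : L → ℝ, ∃ Q ∈ U, (φ : Filter.Germ (U : Filter L) ℝ) = g ∧ Nset L U φ Q ⊆ O := by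
  induction hO with
  | basic s hs =>
      rcases hs with ⟨φ, Q, hQ, rfl⟩ | ⟨A, rfl⟩
      · refine ⟨φ, Q, hQ, ?_, subset_rfl⟩
        rcases hg with ⟨p, _, hp⟩ | hp
        · exact absurd hp (by simp)
        · exact (Sum.inr.inj hp).symm
      · obtain ⟨p, _, hp⟩ := hg; exact absurd hp (by simp)
  | univ =>
      obtain ⟨φ, rfl⟩ := g.exists_rep
      exact ⟨φ, univ, univ_mem, rfl, subset_univ _⟩
  | inter s t hs ht ihs iht =>
      obtain ⟨φ1, Q1, hQ1, h1, hsub1⟩ := ihs hg.1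
      obtain ⟨φ2, Q2, hQ2, h2, hsub2⟩ := iht hg.2
      have hT : {l | φ1 l = φ2 l} ∈ U := Filter.Germ.coe_eq.mp (h1.trans h2.symm)
      refine ⟨φ1, Q1 ∩ Q2 ∩ {l | φ1 l = φ2 l}, inter_mem (inter_mem hQ1 hQ2) hT, h1,
        subset_inter ?_ ?_⟩
      · exact (nset_subset L U (fun l hl => hl.1.1) (fun l _ => rfl) rfl).trans hsub1
      · exact (nset_subset L U (fun l hl => hl.1.2) (fun l hl => hl.2) (h1.trans h2.symm)).trans
          hsub2
  | sUnion S hS ih =>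
      obtain ⟨s, hs, hgs⟩ := hg
      obtain ⟨φ, Q, hQ, h, hsub⟩ := ih s hs hgs
      exact ⟨φ, Q, hQ, h, hsub.trans (subset_sUnion_of_mem hs)⟩

/-- for `E ⊆ ℝ`, the closure of `L × E` in the canonical
`(L,U)`-completion (the slim topology) equals `(L × E) ⊎ E*`, where
`E* = {[ψ]_U : ψ(λ) ∈ E for all λ}` is the natural extension of `E`. -/
theorem stmt15 (hfree : ∀ x : L, (U : Filter L) ≠ pure x) (E : Set ℝ) :
    @closure (RL L U) (slimTop L U) (Sum.inl '' (Set.univ ×ˢ E)) =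
      (Sum.inl '' (Set.univ ×ˢ E)) ∪
        Sum.inr '' {g : Filter.Germ (U : Filter L) ℝ |
          ∃ ψ : L → ℝ, (∀ l, ψ l ∈ E) ∧ g = (ψ : Filter.Germ (U : Filter L) ℝ)} := by
  classical
  letI := slimTop L U
  set s : Set (RL L U) := Sum.inl '' (Set.univ ×ˢ E) with hs
  ext x
  constructor
  · intro hx
    match x with
    | Sum.inl p =>
        left
        have hO : IsOpen (Sum.inl '' ({p} : Set (L × ℝ)) : Set (RL L U)) :=
          TopologicalSpace.GenerateOpen.basic _ (Or.inr ⟨{p}, rfl⟩)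
        obtain ⟨y, hy1, hy2⟩ := (mem_closure_iff.mp hx) _ hO ⟨p, rfl, rfl⟩
        obtain ⟨q, hq, rfl⟩ := hy1
        simp only [mem_singleton_iff] at hq; subst hq; exact hy2
    | Sum.inr g =>
        right
        obtain ⟨φ, rfl⟩ := g.exists_rep
        have hSU : {l | φ l ∈ E} ∈ U := by
          by_contra hS
          have hSc : {l | φ l ∈ E}ᶜ ∈ U := (Ultrafilter.compl_mem_iff_notMem).mpr hS
          have hO : IsOpen (Nset L U φ {l | φ l ∈ E}ᶜ) :=
            TopologicalSpace.GenerateOpen.basic _ (Or.inl ⟨φ, _, hSc, rfl⟩)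
          obtain ⟨y, hy1, hy2⟩ := (mem_closure_iff.mp hx) _ hO
            (Or.inr (mem_singleton _))
          rcases hy1 with ⟨q, ⟨l, hl, rfl⟩, rfl⟩ | hy1
          · obtain ⟨q', hq', hq''⟩ := hy2
            have : q' = (l, φ l) := Sum.inl.injEq .. ▸ hq''
            subst this
            exact hl hq'.2
          · change _ = _ at hy1; subst hy1
            obtain ⟨q', _, hq''⟩ := hy2
            exact absurd hq'' (by simp)
        obtain ⟨l0, hl0⟩ := Filter.nonempty_of_mem (hSU : {l | φ l ∈ E} ∈ (U : Filter L))
        refine ⟨(φ : Filter.Germ (U : Filter L) ℝ),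
          ⟨fun l => if φ l ∈ E then φ l else φ l0, fun l => ?_, ?_⟩, rfl⟩
        · dsimp only; split_ifs with h; exacts [h, hl0]
        · refine Filter.Germ.coe_eq.mpr (Filter.eventually_of_mem hSU fun l hl => ?_)
          exact (if_pos hl).symm
  · rintro (hx | ⟨g, ⟨ψ, hψ, rfl⟩, rfl⟩)
    · exact subset_closure hx
    · refine mem_closure_iff.mpr ?_
      intro O hO hgO
      obtain ⟨φ, Q, hQ, hφg, hsub⟩ := exists_basic L U hO hgO
      have hT : {l | φ l = ψ l} ∈ U := Filter.Germ.coe_eq.mp hφg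
      obtain ⟨l, hl⟩ := Filter.nonempty_of_mem
        (inter_mem hQ hT : Q ∩ {l | φ l = ψ l} ∈ (U : Filter L))
      refine ⟨Sum.inl (l, φ l), hsub (Or.inl ⟨(l, φ l), ⟨l, hl.1, rfl⟩, rfl⟩),
        ⟨(l, φ l), ⟨mem_univ _, hl.2 ▸ hψ l⟩, rfl⟩⟩
end
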